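/- Let M be a self-adjoint matrix on a finite set X of size m with entries bounded by 1, normalized as an operator on L²(X) with uniform probability measure. Let λ₁, λ₂, … be its eigenvalues ordered with |λ₁| ≥ |λ₂| ≥ …, with orthonormal eigenvectors f₁, f₂, …. Then for every {0,1}-valued function h on X and every t ≥ 1: |⟨h, Mh⟩ − Σ_{j=1}^t λ_j |⟨h, f_j⟩|²| ≤ √(1/t). -/

import Mathlib

open Finset

lemma bessel_fin {ι Y : Type*} [Fintype ι] [DecidableEq ι] [Fintype Y]
    (v : ι → Y → ℂ)
    (horth : ∀ i j, ∑ x, (starRingEnd ℂ) (v i x) * v j x = if i = j then 1 else 0)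
    (w : Y → ℂ) :
    ∑ i, ‖∑ x, (starRingEnd ℂ) (v i x) * w x‖ ^ 2
      ≤ ∑ x, ‖w x‖ ^ 2 := by
  let v' : ι → EuclideanSpace ℂ Y := fun i => WithLp.toLp 2 (v i)
  let w' : EuclideanSpace ℂ Y := WithLp.toLp 2 w
  have hON : Orthonormal ℂ v' := by
    rw [orthonormal_iff_ite]
    intro i j
    simpa [v', PiLp.inner_apply, RCLike.inner_apply, mul_comm] using horth i j
  have hb := hON.sum_inner_products_le (s := univ) w'
  have hw : ‖w'‖ ^ 2 = ∑ x, ‖w x‖ ^ 2 := by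
    rw [EuclideanSpace.norm_eq, Real.sq_sqrt (by positivity)]
  rw [hw] at hb
  refine le_trans (le_of_eq ?_) hb
  refine Finset.sum_congr rfl fun i _ => ?_
  simp [v', w', PiLp.inner_apply, RCLike.inner_apply, mul_comm]

lemma factor2 {A B : Type*} [Fintype A] [Fintype B] (g : A → B → ℂ) (a : A → ℂ) (b : B → ℂ)
    (hg : ∀ x y, g x y = a x * b y) :
    ∑ x, ∑ y, g x y = (∑ x, a x) * (∑ y, b y) := by
  rw [Finset.sum_mul_sum]
  exact Finset.sum_congr rfl fun x _ => Finset.sum_congr rfl fun y _ => hg x y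

theorem stmt9 {X : Type*} [Fintype X] (M : X → X → ℂ)
    (hsa : ∀ x y, M x y = (starRingEnd ℂ) (M y x))
    (hbdd : ∀ x y, ‖M x y‖ ≤ 1)
    (f : Fin (Fintype.card X) → X → ℂ) (lam : Fin (Fintype.card X) → ℂ)
    (horth : ∀ i j,
      (Fintype.card X : ℂ)⁻¹ * ∑ x, f i x * (starRingEnd ℂ) (f j x) = if i = j then 1 else 0)
    (hspec : ∀ x y, M x y = ∑ j, lam j * f j x * (starRingEnd ℂ) (f j y))
    (hord : ∀ i j, i ≤ j → ‖lam j‖ ≤ ‖lam i‖)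
    (h : X → ℂ) (hh : ∀ x, h x = 0 ∨ h x = 1)
    (t : ℕ) (ht : 1 ≤ t) :
    ‖((Fintype.card X : ℂ)⁻¹ * ∑ x, (starRingEnd ℂ) (h x) *
            ((Fintype.card X : ℂ)⁻¹ * ∑ y, M x y * h y)
          - ∑ j ∈ Finset.univ.filter (fun j : Fin (Fintype.card X) => (j : ℕ) < t),
              lam j * ((‖(Fintype.card X : ℂ)⁻¹ *
                ∑ x, h x * (starRingEnd ℂ) (f j x)‖ : ℝ) : ℂ) ^ 2)‖
      ≤ Real.sqrt (1 / t) := by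
  classical
  by_cases hm0 : Fintype.card X = 0
  · haveI : IsEmpty X := Fintype.card_eq_zero_iff.mp hm0
    haveI : IsEmpty (Fin (Fintype.card X)) := by rw [hm0]; infer_instance
    refine le_trans (le_of_eq ?_) (Real.sqrt_nonneg _)
    simp
  have hm : 0 < Fintype.card X := Nat.pos_of_ne_zero hm0
  set μ : ℂ := (Fintype.card X : ℂ)⁻¹ with hμdef
  set c : Fin (Fintype.card X) → ℂ :=
    fun j => μ * ∑ x, h x * (starRingEnd ℂ) (f j x) with hcdef
  have hconjμ : (starRingEnd ℂ) μ = μ := by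
    simp [hμdef, map_inv₀, Complex.conj_natCast]
  have horth' : ∀ i j, μ * ∑ x, (starRingEnd ℂ) (f i x) * f j x = if i = j then 1 else 0 := by
    intro i j
    have h2 := congrArg (starRingEnd ℂ) (horth i j)
    simp only [map_mul, map_sum, hconjμ, Complex.conj_conj,
      apply_ite (starRingEnd ℂ), map_one, map_zero] at h2
    rw [← h2]
  -- basic facts about c
  have hcconj : ∀ j, (starRingEnd ℂ) (c j) = μ * ∑ x, (starRingEnd ℂ) (h x) * f j x := by
    intro j
    simp only [hcdef, map_mul, map_sum, hconjμ, Complex.conj_conj]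
  have hcalt : ∀ j, c j = μ * ∑ y, (starRingEnd ℂ) (f j y) * h y := by
    intro j
    simp only [hcdef]
    congr 1
    exact Finset.sum_congr rfl fun y _ => mul_comm _ _
  have hc2 : ∀ j, ((‖c j‖ : ℂ)) ^ 2 = c j * (starRingEnd ℂ) (c j) := by
    intro j
    rw [Complex.mul_conj]
    norm_cast
    exact Complex.sq_norm _
  have hrow : ∀ x, μ * ∑ y, M x y * h y = ∑ j, lam j * f j x * c j := by
    intro x
    simp only [hspec, hcalt, Finset.sum_mul, Finset.mul_sum]
    rw [Finset.sum_comm]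
    exact Finset.sum_congr rfl fun j _ => Finset.sum_congr rfl fun y _ => by ring
  have hA : μ * ∑ x, (starRingEnd ℂ) (h x) * (μ * ∑ y, M x y * h y)
      = ∑ j, lam j * ((‖c j‖ : ℂ)) ^ 2 := by
    calc μ * ∑ x, (starRingEnd ℂ) (h x) * (μ * ∑ y, M x y * h y)
        = ∑ j, lam j * ((μ * ∑ x, (starRingEnd ℂ) (h x) * f j x) * c j) := by
          simp only [hrow, Finset.mul_sum, Finset.sum_mul]
          rw [Finset.sum_comm]
          exact Finset.sum_congr rfl fun j _ => Finset.sum_congr rfl fun x _ => by ring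
      _ = ∑ j, lam j * ((‖c j‖ : ℂ)) ^ 2 := by
          refine Finset.sum_congr rfl fun j _ => ?_
          rw [← hcconj j, hc2 j]; ring
  -- Bessel for h
  set sq : ℂ := ((Real.sqrt (Fintype.card X : ℝ)⁻¹ : ℝ) : ℂ) with hsqdef
  have hs : sq * sq = μ := by
    rw [hsqdef, ← Complex.ofReal_mul, Real.mul_self_sqrt (by positivity), hμdef]
    push_cast
    ring
  have hconjsq : (starRingEnd ℂ) sq = sq := by
    rw [hsqdef]; exact Complex.conj_ofReal _
  have horthB : ∀ i j, ∑ x, (starRingEnd ℂ) (sq * f i x) * (sq * f j x)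
      = if i = j then 1 else 0 := by
    intro i j
    calc ∑ x, (starRingEnd ℂ) (sq * f i x) * (sq * f j x)
        = μ * ∑ x, (starRingEnd ℂ) (f i x) * f j x := by
          rw [Finset.mul_sum]
          refine Finset.sum_congr rfl fun x _ => ?_
          rw [map_mul, hconjsq, ← hs]
          ring
      _ = if i = j then 1 else 0 := horth' i j
  have hlhsB : ∀ i, ∑ x, (starRingEnd ℂ) (sq * f i x) * (sq * h x) = c i := by
    intro i
    rw [hcalt i, Finset.mul_sum]
    refine Finset.sum_congr rfl fun x _ => ?_
    rw [map_mul, hconjsq, ← hs]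
    ring
  have habs_h : ∀ x, ‖h x‖ ≤ 1 := by
    intro x; rcases hh x with h0 | h0 <;> simp [h0]
  have hrhsB : ∑ x, ‖sq * h x‖ ^ 2 ≤ 1 := by
    have hcardne : ((Fintype.card X : ℝ)) ≠ 0 := Nat.cast_ne_zero.mpr hm0
    calc ∑ x, ‖sq * h x‖ ^ 2
        ≤ ∑ _x : X, (Fintype.card X : ℝ)⁻¹ := by
          refine Finset.sum_le_sum fun x _ => ?_
          rw [norm_mul, hsqdef, Complex.norm_real, Real.norm_eq_abs,
            abs_of_nonneg (Real.sqrt_nonneg _), mul_pow,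
            Real.sq_sqrt (by positivity)]
          exact mul_le_of_le_one_right (by positivity)
            (by nlinarith [habs_h x, norm_nonneg (h x)])
      _ = 1 := by
          rw [Finset.sum_const, Finset.card_univ, nsmul_eq_mul]
          field_simp
  have hB : ∑ j, ‖c j‖ ^ 2 ≤ 1 := by
    have key := bessel_fin (fun i x => sq * f i x) horthB (fun x => sq * h x)
    refine le_trans (le_of_eq ?_) (le_trans key hrhsB)
    exact Finset.sum_congr rfl fun i _ => by rw [hlhsB i]
  -- Bessel for the kernel itself: ∑ |lam j|^2 ≤ 1
  have horthC : ∀ j k, ∑ p : X × X,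
      (starRingEnd ℂ) (μ * f j p.1 * (starRingEnd ℂ) (f j p.2)) *
        (μ * f k p.1 * (starRingEnd ℂ) (f k p.2)) = if j = k then 1 else 0 := by
    intro j k
    rw [Fintype.sum_prod_type]
    calc ∑ x, ∑ y, (starRingEnd ℂ) (μ * f j x * (starRingEnd ℂ) (f j y)) *
            (μ * f k x * (starRingEnd ℂ) (f k y))
        = (∑ x, μ * ((starRingEnd ℂ) (f j x) * f k x)) *
            (∑ y, μ * (f j y * (starRingEnd ℂ) (f k y))) := by
          refine factor2 _ _ _ fun x y => ?_
          simp only [map_mul, Complex.conj_conj, hconjμ]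
          ring
      _ = (μ * ∑ x, (starRingEnd ℂ) (f j x) * f k x) *
            (μ * ∑ y, f j y * (starRingEnd ℂ) (f k y)) := by
          rw [← Finset.mul_sum, ← Finset.mul_sum]
      _ = (if j = k then 1 else 0) * (if j = k then 1 else 0) := by
          rw [horth' j k, horth j k]
      _ = if j = k then 1 else 0 := by by_cases hjk : j = k <;> simp [hjk]
  have hinC : ∀ j, ∑ p : X × X,
      (starRingEnd ℂ) (μ * f j p.1 * (starRingEnd ℂ) (f j p.2)) * (μ * M p.1 p.2)
        = lam j := by
    intro j
    rw [Fintype.sum_prod_type]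
    have step1 : ∀ x y, (starRingEnd ℂ) (μ * f j x * (starRingEnd ℂ) (f j y)) * (μ * M x y)
        = ∑ k, lam k * ((μ * ((starRingEnd ℂ) (f j x) * f k x)) *
            (μ * (f j y * (starRingEnd ℂ) (f k y)))) := by
      intro x y
      rw [hspec]
      simp only [map_mul, hconjμ, Complex.conj_conj, Finset.mul_sum, Finset.sum_mul]
      exact Finset.sum_congr rfl fun k _ => by ring
    calc ∑ x, ∑ y, (starRingEnd ℂ) (μ * f j x * (starRingEnd ℂ) (f j y)) * (μ * M x y)
        = ∑ x, ∑ y, ∑ k, lam k * ((μ * ((starRingEnd ℂ) (f j x) * f k x)) *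
            (μ * (f j y * (starRingEnd ℂ) (f k y)))) := by
          exact Finset.sum_congr rfl fun x _ => Finset.sum_congr rfl fun y _ => step1 x y
      _ = ∑ x, ∑ k, ∑ y, lam k * ((μ * ((starRingEnd ℂ) (f j x) * f k x)) *
            (μ * (f j y * (starRingEnd ℂ) (f k y)))) :=
          Finset.sum_congr rfl fun x _ => Finset.sum_comm
      _ = ∑ k, ∑ x, ∑ y, lam k * ((μ * ((starRingEnd ℂ) (f j x) * f k x)) *
            (μ * (f j y * (starRingEnd ℂ) (f k y)))) := Finset.sum_comm
      _ = ∑ k, lam k * ((μ * ∑ x, (starRingEnd ℂ) (f j x) * f k x) *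
            (μ * ∑ y, f j y * (starRingEnd ℂ) (f k y))) := by
          refine Finset.sum_congr rfl fun k _ => ?_
          rw [factor2 _ (fun x => lam k * (μ * ((starRingEnd ℂ) (f j x) * f k x)))
            (fun y => μ * (f j y * (starRingEnd ℂ) (f k y))) (fun x y => by ring)]
          simp only [← Finset.mul_sum]
          ring
      _ = ∑ k, lam k * ((if j = k then 1 else 0) * (if j = k then 1 else 0)) := by
          refine Finset.sum_congr rfl fun k _ => ?_
          rw [horth' j k, horth j k]
      _ = lam j := by simp
  have hμabs : ‖μ‖ = (Fintype.card X : ℝ)⁻¹ := by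
    rw [hμdef, norm_inv, Complex.norm_natCast]
  have hC : ∑ j, ‖lam j‖ ^ 2 ≤ 1 := by
    have key := bessel_fin (fun j (p : X × X) => μ * f j p.1 * (starRingEnd ℂ) (f j p.2))
      horthC (fun p => μ * M p.1 p.2)
    have hrhsC : ∑ p : X × X, ‖μ * M p.1 p.2‖ ^ 2 ≤ 1 := by
      have hcardne : ((Fintype.card X : ℝ)) ≠ 0 := Nat.cast_ne_zero.mpr hm0
      calc ∑ p : X × X, ‖μ * M p.1 p.2‖ ^ 2
          ≤ ∑ _p : X × X, ((Fintype.card X : ℝ)⁻¹) ^ 2 := by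
            refine Finset.sum_le_sum fun p _ => ?_
            rw [norm_mul, hμabs, mul_pow]
            exact mul_le_of_le_one_right (by positivity)
              (by nlinarith [hbdd p.1 p.2, norm_nonneg (M p.1 p.2)])
        _ = 1 := by
            rw [Finset.sum_const, Finset.card_univ, Fintype.card_prod, nsmul_eq_mul]
            push_cast
            field_simp
    refine le_trans (le_of_eq ?_) (le_trans key hrhsC)
    exact Finset.sum_congr rfl fun j _ => by rw [hinC j]
  -- individual eigenvalue tail bound
  have htpos : (0:ℝ) < t := by exact_mod_cast ht
  have hlam : ∀ j : Fin (Fintype.card X), t ≤ (j:ℕ) →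
      ‖lam j‖ ≤ Real.sqrt (1 / t) := by
    intro j hj
    have htm : t ≤ Fintype.card X := le_of_lt (lt_of_le_of_lt hj j.isLt)
    set g : ℕ → ℝ := fun i =>
      if hi : i < Fintype.card X then ‖lam ⟨i, hi⟩‖ ^ 2 else 0 with hgdef
    have hgnn : ∀ i, 0 ≤ g i := by
      intro i; rw [hgdef]; dsimp only; split <;> positivity
    have hsum : ∑ i ∈ Finset.range (Fintype.card X), g i = ∑ i, ‖lam i‖ ^ 2 := by
      rw [← Fin.sum_univ_eq_sum_range g (Fintype.card X)]
      refine Finset.sum_congr rfl fun i _ => ?_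
      rw [hgdef]; dsimp only; rw [dif_pos i.isLt]
    have hstep1 : (t : ℝ) * ‖lam j‖ ^ 2 ≤ ∑ i ∈ Finset.range t, g i := by
      have hkey := Finset.card_nsmul_le_sum (Finset.range t) g (‖lam j‖ ^ 2) ?_
      · simpa [Finset.card_range, nsmul_eq_mul] using hkey
      · intro i hi
        have hit : i < t := Finset.mem_range.mp hi
        have him : i < Fintype.card X := lt_of_lt_of_le hit htm
        rw [hgdef]; dsimp only; rw [dif_pos him]
        have hle : (⟨i, him⟩ : Fin (Fintype.card X)) ≤ j := by
          rw [Fin.le_def]; exact le_trans (le_of_lt hit) hj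
        have hoj := hord _ _ hle
        nlinarith [norm_nonneg (lam j)]
    have hstep2 : ∑ i ∈ Finset.range t, g i ≤ ∑ i ∈ Finset.range (Fintype.card X), g i :=
      Finset.sum_le_sum_of_subset_of_nonneg (Finset.range_subset_range.mpr htm) (fun i _ _ => hgnn i)
    have hfin : (t:ℝ) * ‖lam j‖ ^ 2 ≤ 1 :=
      le_trans hstep1 (le_trans hstep2 (le_of_eq hsum |>.trans hC))
    rw [Real.le_sqrt (norm_nonneg _)]
    rw [le_div_iff₀ htpos]
    nlinarith [hfin]
    positivity
  -- final assembly
  have hsplit : (μ * ∑ x, (starRingEnd ℂ) (h x) * (μ * ∑ y, M x y * h y))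
      - (∑ j ∈ Finset.univ.filter (fun j : Fin (Fintype.card X) => (j:ℕ) < t),
          lam j * ((‖c j‖ : ℂ)) ^ 2)
      = ∑ j ∈ Finset.univ.filter (fun j : Fin (Fintype.card X) => ¬ ((j:ℕ) < t)),
          lam j * ((‖c j‖ : ℂ)) ^ 2 := by
    rw [hA, ← Finset.sum_filter_add_sum_filter_not Finset.univ
      (fun j : Fin (Fintype.card X) => (j:ℕ) < t)
      (fun j => lam j * ((‖c j‖ : ℂ)) ^ 2)]
    ring
  show ‖(μ * ∑ x, (starRingEnd ℂ) (h x) * (μ * ∑ y, M x y * h y))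
        - ∑ j ∈ Finset.univ.filter (fun j : Fin (Fintype.card X) => (j:ℕ) < t),
            lam j * ((‖c j‖ : ℂ)) ^ 2‖
      ≤ Real.sqrt (1 / t)
  rw [hsplit]
  calc ‖∑ j ∈ Finset.univ.filter (fun j : Fin (Fintype.card X) => ¬ ((j:ℕ) < t)),
          lam j * ((‖c j‖ : ℂ)) ^ 2‖
      ≤ ∑ j ∈ Finset.univ.filter (fun j : Fin (Fintype.card X) => ¬ ((j:ℕ) < t)),
          ‖lam j * ((‖c j‖ : ℂ)) ^ 2‖ := norm_sum_le _ _
    _ = ∑ j ∈ Finset.univ.filter (fun j : Fin (Fintype.card X) => ¬ ((j:ℕ) < t)),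
          ‖lam j‖ * ‖c j‖ ^ 2 := by
        refine Finset.sum_congr rfl fun j _ => ?_
        rw [norm_mul, norm_pow, Complex.norm_real, Real.norm_eq_abs, abs_of_nonneg (norm_nonneg _)]
    _ ≤ ∑ j ∈ Finset.univ.filter (fun j : Fin (Fintype.card X) => ¬ ((j:ℕ) < t)),
          Real.sqrt (1 / t) * ‖c j‖ ^ 2 := by
        refine Finset.sum_le_sum fun j hj => ?_
        have hjt : t ≤ (j:ℕ) := Nat.le_of_not_lt (Finset.mem_filter.mp hj).2
        exact mul_le_mul_of_nonneg_right (hlam j hjt) (by positivity)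
    _ = Real.sqrt (1 / t) * ∑ j ∈ Finset.univ.filter (fun j : Fin (Fintype.card X) => ¬ ((j:ℕ) < t)),
          ‖c j‖ ^ 2 := by rw [Finset.mul_sum]
    _ ≤ Real.sqrt (1 / t) * 1 := by
        refine mul_le_mul_of_nonneg_left ?_ (Real.sqrt_nonneg _)
        refine le_trans ?_ hB
        exact Finset.sum_le_sum_of_subset_of_nonneg (Finset.filter_subset _ _)
          (fun j _ _ => by positivity)
    _ = Real.sqrt (1 / t) := mul_one _
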